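/- arXiv:1805.07645 — 2 statements merged into one kernel-verified Lean document; each statement's English description precedes it below -/
import Mathlib

section
/- Let H be a normed vector space, c : H → [0,∞) a scale function, r : [0,∞) → [0,∞) with z ≤ r(z) for all z ≥ 0, and R : H → [0,∞) with r(c(θ)) ≤ R(θ) < ∞ for all θ. Suppose L̂_η, L_η, L : H → ℝ satisfy: (i) |L̂_η(θ) − L_η(θ)| ≤ ε·c(θ) for all θ, (ii) |L_η(θ) − L(θ)| ≤ ε'·c(θ) for all θ with ε' ≤ ε, (iii) θ* minimizes L over H, θ_η* minimizes L_η over H, and (iv) θ̂_η is a ξ-approximate minimizer of L̂_η + λ·R, i.e., L̂_η(θ̂_η) + λR(θ̂_η) ≤ ξ + inf_θ (L̂_η(θ) + λR(θ)), with λ = α·ε for α ≥ 2. Then L(θ̂_η) − L(θ*) ≤ ε·(α·R(θ_η*) + c(θ_η*)) + ε'·c(θ*) + ξ. -/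
/-- Perturbed loss consistency. -/
theorem stmt2 {H : Type*} [NormedAddCommGroup H] [NormedSpace ℝ H]
    (c : H → ℝ) (hc : ∀ θ, 0 ≤ c θ)
    (r : ℝ → ℝ) (hr0 : ∀ z, 0 ≤ z → 0 ≤ r z) (hr : ∀ z, 0 ≤ z → z ≤ r z)
    (R : H → ℝ) (hR0 : ∀ θ, 0 ≤ R θ) (hRr : ∀ θ, r (c θ) ≤ R θ)
    (Lh Lη L : H → ℝ) (ε ε' ξ α : ℝ)
    (hε : 0 ≤ ε) (hε' : 0 ≤ ε') (hξ : 0 ≤ ξ) (hα : 2 ≤ α) (hεε' : ε' ≤ ε)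
    (h1 : ∀ θ, |Lh θ - Lη θ| ≤ ε * c θ)
    (h2 : ∀ θ, |Lη θ - L θ| ≤ ε' * c θ)
    (θs θηs θh : H)
    (h3 : ∀ θ, L θs ≤ L θ)
    (h4 : ∀ θ, Lη θηs ≤ Lη θ)
    (h5 : ∀ θ, Lh θh + (α * ε) * R θh ≤ ξ + (Lh θ + (α * ε) * R θ)) :
    L θh - L θs ≤ ε * (α * R θηs + c θηs) + ε' * c θs + ξ := by
  obtain ⟨a1, a1'⟩ := abs_le.mp (h1 θh)
  obtain ⟨b1, b1'⟩ := abs_le.mp (h2 θh)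
  obtain ⟨a2, a2'⟩ := abs_le.mp (h1 θηs)
  obtain ⟨b2, b2'⟩ := abs_le.mp (h2 θs)
  have hcR : c θh ≤ R θh := le_trans (hr _ (hc θh)) (hRr θh)
  have h5' := h5 θηs
  have h4' := h4 θs
  have hcε : ε' * c θh ≤ ε * c θh := mul_le_mul_of_nonneg_right hεε' (hc θh)
  have h2e : 2 * ε ≤ α * ε := mul_le_mul_of_nonneg_right hα hε
  nlinarith [mul_le_mul_of_nonneg_left hcR (mul_nonneg (le_trans (by norm_num) hα) hε),
    mul_nonneg hε (hc θh)]
end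

section
/- Under the same assumptions as the perturbed loss consistency theorem, the key intermediate bound holds: L_η(θ̂_η) − L_η(θ_η*) ≤ ε·(−α·r(c(θ̂_η)) + c(θ̂_η)) + ε·(α·R(θ_η*) + c(θ_η*)) + ξ, where θ̂_η is a ξ-approximate minimizer of L̂_η + α·ε·R, θ_η* minimizes L_η, |L̂_η(θ) − L_η(θ)| ≤ ε·c(θ) for all θ, and r(c(θ)) ≤ R(θ) for all θ. -/
/-- Key intermediate bound in the proof of perturbed loss consistency. -/
theorem stmt3 {H : Type*} [NormedAddCommGroup H] [NormedSpace ℝ H]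
    (c : H → ℝ) (hc : ∀ θ, 0 ≤ c θ)
    (r : ℝ → ℝ) (hr0 : ∀ z, 0 ≤ z → 0 ≤ r z) (hr : ∀ z, 0 ≤ z → z ≤ r z)
    (R : H → ℝ) (hR0 : ∀ θ, 0 ≤ R θ) (hRr : ∀ θ, r (c θ) ≤ R θ)
    (Lh Lη : H → ℝ) (ε ξ α : ℝ)
    (hε : 0 ≤ ε) (hξ : 0 ≤ ξ) (hα : 2 ≤ α)
    (h1 : ∀ θ, |Lh θ - Lη θ| ≤ ε * c θ)
    (θηs θh : H)
    (h4 : ∀ θ, Lη θηs ≤ Lη θ)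
    (h5 : ∀ θ, Lh θh + (α * ε) * R θh ≤ ξ + (Lh θ + (α * ε) * R θ)) :
    Lη θh - Lη θηs ≤ ε * (-(α * r (c θh)) + c θh) + ε * (α * R θηs + c θηs) + ξ := by
  have ha := abs_le.mp (h1 θh)
  have hb := abs_le.mp (h1 θηs)
  have h5' := h5 θηs
  have hRh := hRr θh
  have hmul : (α * ε) * r (c θh) ≤ (α * ε) * R θh :=
    mul_le_mul_of_nonneg_left hRh (by positivity)
  nlinarith [ha.1, ha.2, hb.1, hb.2]
end
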